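/- Let d, m be natural numbers and let c : Fin m → EuclideanSpace ℝ (Fin d) be injective. Consider the set of comparison patterns { p : Fin m → Fin m → Prop | there exists x ∈ EuclideanSpace ℝ (Fin d) such that ‖x − c i‖ ≠ ‖x − c j‖ for all i ≠ j, and p i j ↔ ‖x − c i‖ < ‖x − c j‖ for all i, j }. This set is finite and has at most ∑_{i=0}^{d} binom(m(m−1)/2, i) elements. -/

import Mathlib

open Finset

/-- The set of strict sign vectors realized by affine functionals `x ↦ a k x + b k`. -/
def signSet {ι : Type*} (V : Type*) [AddCommGroup V] [Module ℝ V]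
    (a : ι → V →ₗ[ℝ] ℝ) (b : ι → ℝ) : Set (ι → Bool) :=
  {s | ∃ x : V, ∀ k, if s k then 0 < a k x + b k else a k x + b k < 0}

lemma pascal_sum (N d : ℕ) :
    ∑ i ∈ range (d + 1), Nat.choose (N + 1) i
      = ∑ i ∈ range (d + 1), Nat.choose N i + ∑ i ∈ range d, Nat.choose N i := by
  induction d with
  | zero => simp
  | succ d ih =>
    rw [Finset.sum_range_succ, ih, Finset.sum_range_succ (n := d + 1),
      Finset.sum_range_succ (n := d)]
    have : Nat.choose (N + 1) (d + 1) = Nat.choose N d + Nat.choose N (d + 1) :=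
      Nat.choose_succ_succ N d
    omega

theorem signSet_ncard_le (N : ℕ) :
    ∀ (V : Type) [AddCommGroup V] [Module ℝ V] [FiniteDimensional ℝ V]
    (d : ℕ) (_ : Module.finrank ℝ V ≤ d)
    (a : Fin N → V →ₗ[ℝ] ℝ) (b : Fin N → ℝ),
    (signSet V a b).ncard ≤ ∑ i ∈ range (d + 1), Nat.choose N i := by
  induction N with
  | zero =>
    intro V _ _ _ d hd a b
    have h1 : (signSet V a b).ncard ≤ (Set.univ : Set (Fin 0 → Bool)).ncard :=
      Set.ncard_le_ncard (Set.subset_univ _) (Set.finite_univ)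
    have h2 : (Set.univ : Set (Fin 0 → Bool)).ncard = 1 := by
      rw [Set.ncard_univ]; simp [Nat.card_eq_fintype_card]
    calc (signSet V a b).ncard ≤ 1 := h1.trans_eq h2
      _ ≤ _ := by
        have : 1 ≤ Nat.choose 0 0 := by simp
        calc 1 ≤ ∑ i ∈ range 1, Nat.choose 0 i := by simp
          _ ≤ _ := Finset.sum_le_sum_of_subset (by
            intro i hi; simp at hi ⊢; omega)
  | succ N ih =>
    intro V _ _ _ d hd a b
    set k0 : Fin (N + 1) := Fin.last N with hk0
    by_cases h0 : a k0 = 0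
    · by_cases hb0 : b k0 = 0
      · have hS : signSet V a b = ∅ := by
          ext s
          simp only [signSet, Set.mem_setOf_eq, Set.mem_empty_iff_false, iff_false, not_exists]
          intro x hx
          have := hx k0
          rw [h0, hb0] at this
          by_cases hs : s k0 = true <;> simp [hs] at this
        rw [hS]
        simp
      · -- the last sign is forced; inject into the first-N arrangement
        have hmaps : Set.MapsTo (fun s => s ∘ Fin.castSucc) (signSet V a b)
            (signSet V (a ∘ Fin.castSucc) (b ∘ Fin.castSucc)) := by
          rintro s ⟨x, hx⟩
          exact ⟨x, fun k => hx k.castSucc⟩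
        have hlastval : ∀ s ∈ signSet V a b, s k0 = decide (0 < b k0) := by
          rintro s ⟨x, hx⟩
          have := hx k0
          rw [h0] at this
          simp only [LinearMap.zero_apply, zero_add] at this
          by_cases hs : s k0 = true
          · rw [hs] at this ⊢
            simp only [if_true] at this
            simp [this]
          · rw [Bool.not_eq_true] at hs
            rw [hs] at this ⊢
            simp only [Bool.false_eq_true, if_false] at this
            simp [not_lt_of_gt this, this]
        have hinj : Set.InjOn (fun s => s ∘ Fin.castSucc) (signSet V a b) := by
          intro s1 h1 s2 h2 he
          funext k
          refine Fin.lastCases ?_ ?_ k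
          · rw [← hk0, hlastval s1 h1, hlastval s2 h2]
          · intro i; exact congrFun he i
        calc (signSet V a b).ncard
            ≤ (signSet V (a ∘ Fin.castSucc) (b ∘ Fin.castSucc)).ncard :=
              Set.ncard_le_ncard_of_injOn _ hmaps hinj (Set.toFinite _)
          _ ≤ ∑ i ∈ range (d + 1), Nat.choose N i := ih V d hd _ _
          _ ≤ ∑ i ∈ range (d + 1), Nat.choose (N + 1) i :=
              Finset.sum_le_sum fun i _ => Nat.choose_le_choose i (Nat.le_succ N)
    · -- a k0 ≠ 0 : hyperplane case
      obtain ⟨v, hv⟩ : ∃ v, a k0 v ≠ 0 := by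
        by_contra h
        push_neg at h
        exact h0 (LinearMap.ext fun x => by simpa using h x)
      have hVnt : Nontrivial V := nontrivial_of_ne v 0 (fun h => hv (by simp [h]))
      have hd1 : 1 ≤ d := le_trans (Module.finrank_pos) hd
      obtain ⟨d', rfl⟩ : ∃ d', d = d' + 1 := ⟨d - 1, by omega⟩
      set K := LinearMap.ker (a k0) with hK
      have hrange : LinearMap.range (a k0) = ⊤ := by
        rw [LinearMap.range_eq_top]
        intro y
        exact ⟨(y / a k0 v) • v, by simp [div_mul_cancel₀ _ hv]⟩
      have hkerrank : Module.finrank ℝ K ≤ d' := by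
        have h1 := LinearMap.finrank_range_add_finrank_ker (a k0)
        rw [← hK] at h1
        rw [hrange] at h1
        rw [finrank_top] at h1
        have : Module.finrank ℝ ℝ = 1 := Module.finrank_self ℝ
        rw [this] at h1
        omega
      set x0 : V := (-(b k0) / a k0 v) • v with hx0
      have hx0val : a k0 x0 = -(b k0) := by
        simp [hx0, div_mul_cancel₀ _ hv]
      set a' : Fin N → K →ₗ[ℝ] ℝ := fun k => (a k.castSucc).comp K.subtype with ha'
      set b' : Fin N → ℝ := fun k => a k.castSucc x0 + b k.castSucc with hb'
      set B : Set (Fin (N + 1) → Bool) :=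
        {s ∈ signSet V a b | s k0 = true ∧ Function.update s k0 false ∈ signSet V a b} with hB
      have hsub : signSet V a b ⊆ (signSet V a b \ B) ∪ B := by
        intro s hs
        by_cases h : s ∈ B
        · exact Or.inr h
        · exact Or.inl ⟨hs, h⟩
      have hA : (signSet V a b \ B).ncard
          ≤ (signSet V (a ∘ Fin.castSucc) (b ∘ Fin.castSucc)).ncard := by
        apply Set.ncard_le_ncard_of_injOn (fun s => s ∘ Fin.castSucc) ?_ ?_ (Set.toFinite _)
        · rintro s ⟨⟨x, hx⟩, -⟩
          exact ⟨x, fun k => hx k.castSucc⟩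
        · rintro s1 ⟨hs1, hns1⟩ s2 ⟨hs2, hns2⟩ he
          have hcs : ∀ i : Fin N, s1 i.castSucc = s2 i.castSucc := fun i => congrFun he i
          by_cases hb12 : s1 k0 = s2 k0
          · funext k
            refine Fin.lastCases ?_ hcs k
            rw [← hk0]; exact hb12
          · exfalso
            have hupd : ∀ (t1 t2 : Fin (N+1) → Bool), t1 k0 = true → t2 k0 = false →
                (∀ i : Fin N, t1 i.castSucc = t2 i.castSucc) → Function.update t1 k0 false = t2 := by
              intro t1 t2 ht1 ht2 hcs'
              funext k
              refine Fin.lastCases ?_ ?_ k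
              · rw [← hk0, Function.update_self, ht2]
              · intro i
                rw [Function.update_of_ne (by rw [hk0]; exact (Fin.castSucc_lt_last i).ne) , hcs' i]
            cases hc1 : s1 k0 <;> cases hc2 : s2 k0
            · exact hb12 (hc1.trans hc2.symm)
            · exact hns2 ⟨hs2, hc2, by rw [hupd s2 s1 hc2 hc1 (fun i => (hcs i).symm)]; exact hs1⟩
            · exact hns1 ⟨hs1, hc1, by rw [hupd s1 s2 hc1 hc2 hcs]; exact hs2⟩
            · exact hb12 (hc1.trans hc2.symm)
      have hBT : B.ncard ≤ (signSet K a' b').ncard := by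
        apply Set.ncard_le_ncard_of_injOn (fun s => s ∘ Fin.castSucc) ?_ ?_ (Set.toFinite _)
        · rintro s ⟨⟨xp, hxp⟩, hslast, xm, hxm⟩
          -- signs at the last coordinate
          have hap : 0 < a k0 xp + b k0 := by
            have := hxp k0; rw [hslast] at this; simpa using this
          have ham : a k0 xm + b k0 < 0 := by
            have := hxm k0
            rw [Function.update_self] at this
            simpa using this
          set α : ℝ := a k0 xp + b k0
          set β : ℝ := -(a k0 xm + b k0)
          have hβ : 0 < β := by simp [β]; linarith
          have hαβ : 0 < α + β := by linarith
          set t : ℝ := β / (α + β) with ht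
          have ht0 : 0 < t := div_pos hβ hαβ
          have ht1 : 0 < 1 - t := by
            rw [ht]
            have : β / (α + β) < 1 := (div_lt_one hαβ).mpr (by linarith)
            linarith
          set z : V := (1 - t) • xm + t • xp with hz
          have hzval : ∀ k : Fin (N+1), a k z + b k
              = (1 - t) * (a k xm + b k) + t * (a k xp + b k) := by
            intro k
            simp [hz, map_add, map_smul, smul_eq_mul]
            ring
          have hz0 : a k0 z + b k0 = 0 := by
            rw [hzval k0]
            have : a k0 xm + b k0 = -β := by simp [β]
            rw [this]
            show (1 - t) * (-β) + t * α = 0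
            have htt : t * (α + β) = β := by
              rw [ht]; field_simp
            linear_combination htt
          have hymem : z - x0 ∈ K := by
            rw [hK, LinearMap.mem_ker, map_sub, hx0val]
            linarith [hz0]
          refine ⟨⟨z - x0, hymem⟩, fun k => ?_⟩
          have hval : a' k ⟨z - x0, hymem⟩ + b' k = a k.castSucc z + b k.castSucc := by
            simp [ha', hb', map_sub]
            ring
          have hne : k.castSucc ≠ k0 := by rw [hk0]; exact (Fin.castSucc_lt_last k).ne
          have hpk := hxp k.castSucc
          have hmk := hxm k.castSucc
          rw [Function.update_of_ne hne] at hmk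
          show if (s ∘ Fin.castSucc) k then 0 < a' k ⟨z - x0, hymem⟩ + b' k
            else a' k ⟨z - x0, hymem⟩ + b' k < 0
          cases hsk : s k.castSucc
          · simp only [Function.comp_apply, hsk, Bool.false_eq_true, if_false] at hpk hmk ⊢
            rw [hval, hzval]
            have h1 := mul_neg_of_pos_of_neg ht1 hmk
            have h2 := mul_neg_of_pos_of_neg ht0 hpk
            linarith
          · simp only [Function.comp_apply, hsk, if_true] at hpk hmk ⊢
            rw [hval, hzval]
            have h1 := mul_pos ht1 hmk
            have h2 := mul_pos ht0 hpk
            linarith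
        · rintro s1 ⟨-, hc1, -⟩ s2 ⟨-, hc2, -⟩ he
          funext k
          refine Fin.lastCases ?_ (fun i => congrFun he i) k
          rw [← hk0, hc1, hc2]
      calc (signSet V a b).ncard
          ≤ ((signSet V a b \ B) ∪ B).ncard :=
            Set.ncard_le_ncard hsub (Set.Finite.union (Set.toFinite _) (Set.toFinite _))
        _ ≤ (signSet V a b \ B).ncard + B.ncard := Set.ncard_union_le _ _
        _ ≤ (signSet V (a ∘ Fin.castSucc) (b ∘ Fin.castSucc)).ncard + (signSet K a' b').ncard :=
            Nat.add_le_add hA hBT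
        _ ≤ (∑ i ∈ range (d' + 1 + 1), Nat.choose N i) + ∑ i ∈ range (d' + 1), Nat.choose N i :=
            Nat.add_le_add (ih V (d' + 1) hd _ _) (ih K d' hkerrank a' b')
        _ = ∑ i ∈ range (d' + 1 + 1), Nat.choose (N + 1) i := (pascal_sum N (d' + 1)).symm

def pairSigmaEquiv (m : ℕ) : {q : Fin m × Fin m // q.1 < q.2} ≃ Σ j : Fin m, Fin j.val where
  toFun q := ⟨q.1.2, ⟨q.1.1.val, q.2⟩⟩
  invFun s := ⟨(⟨s.2.val, s.2.isLt.trans s.1.isLt⟩, s.1), s.2.isLt⟩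
  left_inv := by rintro ⟨⟨i, j⟩, h⟩; rfl
  right_inv := by rintro ⟨j, i⟩; rfl

lemma card_pairs (m : ℕ) :
    Fintype.card {q : Fin m × Fin m // q.1 < q.2} = m * (m - 1) / 2 := by
  rw [Fintype.card_congr (pairSigmaEquiv m), Fintype.card_sigma]
  simp only [Fintype.card_fin]
  rw [Fin.sum_univ_eq_sum_range (fun i => i) m]
  exact Finset.sum_range_id m

/-- Lemma 4.3 (exact cell-count bound): the strict distance-comparison patterns realized by
tie-free points in `ℝ^d` with respect to `m` pairwise-distinct candidate positions number at
most `∑_{i=0}^{d} C(m(m-1)/2, i)`. -/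
theorem comparison_patterns_finite_card_le_cells
    (d m : ℕ) (c : Fin m → EuclideanSpace ℝ (Fin d)) (hc : Function.Injective c) :
    ({p : Fin m → Fin m → Prop | ∃ x : EuclideanSpace ℝ (Fin d),
        (∀ i j : Fin m, i ≠ j → ‖x - c i‖ ≠ ‖x - c j‖) ∧
        (∀ i j : Fin m, p i j ↔ ‖x - c i‖ < ‖x - c j‖)}).Finite ∧
    ({p : Fin m → Fin m → Prop | ∃ x : EuclideanSpace ℝ (Fin d),
        (∀ i j : Fin m, i ≠ j → ‖x - c i‖ ≠ ‖x - c j‖) ∧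
        (∀ i j : Fin m, p i j ↔ ‖x - c i‖ < ‖x - c j‖)}).ncard
      ≤ ∑ i ∈ Finset.range (d + 1), Nat.choose (m * (m - 1) / 2) i := by
  classical
  set PS : Set (Fin m → Fin m → Prop) :=
    {p : Fin m → Fin m → Prop | ∃ x : EuclideanSpace ℝ (Fin d),
        (∀ i j : Fin m, i ≠ j → ‖x - c i‖ ≠ ‖x - c j‖) ∧
        (∀ i j : Fin m, p i j ↔ ‖x - c i‖ < ‖x - c j‖)} with hPS
  have hfin : PS.Finite := by
    have hinj : Set.InjOn (fun (p : Fin m → Fin m → Prop) (i j : Fin m) => decide (p i j)) PS := by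
      intro p1 _ p2 _ h
      funext i j
      exact propext (decide_eq_decide.mp (congrFun (congrFun h i) j))
    exact Set.Finite.of_finite_image (Set.toFinite _) hinj
  refine ⟨hfin, ?_⟩
  set N : ℕ := m * (m - 1) / 2 with hN
  set e : {q : Fin m × Fin m // q.1 < q.2} ≃ Fin N := Fintype.equivFinOfCardEq (card_pairs m)
    with he
  set a : Fin N → EuclideanSpace ℝ (Fin d) →ₗ[ℝ] ℝ := fun k =>
    (2:ℝ) • (innerSL ℝ (c (e.symm k).1.1 - c (e.symm k).1.2)).toLinearMap with ha
  set b : Fin N → ℝ := fun k => ‖c (e.symm k).1.2‖^2 - ‖c (e.symm k).1.1‖^2 with hb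
  -- the affine value equals the difference of squared distances
  have hform : ∀ (i j : Fin m) (x : EuclideanSpace ℝ (Fin d)),
      ((2:ℝ) • (innerSL ℝ (c i - c j)).toLinearMap) x + (‖c j‖^2 - ‖c i‖^2)
        = ‖x - c j‖^2 - ‖x - c i‖^2 := by
    intro i j x
    have h1 : ((2:ℝ) • (innerSL ℝ (c i - c j)).toLinearMap) x = 2 * (inner ℝ (c i - c j) x : ℝ) := by
      simp only [LinearMap.smul_apply, ContinuousLinearMap.coe_coe, innerSL_apply_apply, smul_eq_mul]
    have h2 : (inner ℝ (c i - c j) x : ℝ) = inner ℝ (c i) x - inner ℝ (c j) x := inner_sub_left _ _ _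
    have h3 : ‖x - c i‖^2 = ‖x‖^2 - 2 * inner ℝ x (c i) + ‖c i‖^2 := norm_sub_sq_real x (c i)
    have h4 : ‖x - c j‖^2 = ‖x‖^2 - 2 * inner ℝ x (c j) + ‖c j‖^2 := norm_sub_sq_real x (c j)
    have h5 : (inner ℝ x (c i) : ℝ) = inner ℝ (c i) x := real_inner_comm _ _
    have h6 : (inner ℝ x (c j) : ℝ) = inner ℝ (c j) x := real_inner_comm _ _
    rw [h1, h2, h3, h4, h5, h6]
    ring
  have hcmp : ∀ (u w : EuclideanSpace ℝ (Fin d)), ‖u‖ < ‖w‖ ↔ ‖u‖^2 < ‖w‖^2 := fun u w =>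
    (pow_lt_pow_iff_left₀ (norm_nonneg _) (norm_nonneg _) two_ne_zero).symm
  set G : (Fin m → Fin m → Prop) → (Fin N → Bool) := fun p k =>
    decide (p (e.symm k).1.1 (e.symm k).1.2) with hG
  have hmaps : Set.MapsTo G PS (signSet (EuclideanSpace ℝ (Fin d)) a b) := by
    rintro p ⟨x, hfree, hp⟩
    refine ⟨x, fun k => ?_⟩
    rcases hq : e.symm k with ⟨⟨i, j⟩, hij⟩
    have hvab : a k x + b k = ‖x - c j‖^2 - ‖x - c i‖^2 := by
      rw [ha, hb]
      simp only [hq]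
      exact hform i j x
    have hGk : G p k = decide (p i j) := by rw [hG]; simp only [hq]
    have hne : ‖x - c i‖ ≠ ‖x - c j‖ := hfree i j (ne_of_lt hij)
    rw [hGk]
    by_cases hpij : p i j
    · have hlt : ‖x - c i‖ < ‖x - c j‖ := (hp i j).mp hpij
      have hsq : ‖x - c i‖^2 < ‖x - c j‖^2 := (hcmp _ _).mp hlt
      have hdec : decide (p i j) = true := decide_eq_true hpij
      simp only [hdec, if_true]
      rw [hvab]; linarith
    · have hnlt : ¬ ‖x - c i‖ < ‖x - c j‖ := fun h => hpij ((hp i j).mpr h)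
      have hlt : ‖x - c j‖ < ‖x - c i‖ := lt_of_le_of_ne (not_lt.mp hnlt) hne.symm
      have hsq : ‖x - c j‖^2 < ‖x - c i‖^2 := (hcmp _ _).mp hlt
      have hdec : decide (p i j) = false := decide_eq_false hpij
      simp only [hdec, Bool.false_eq_true, if_false]
      rw [hvab]; linarith
  have hinjG : Set.InjOn G PS := by
    rintro p1 ⟨x1, hfree1, hp1⟩ p2 ⟨x2, hfree2, hp2⟩ hGeq
    have key : ∀ i j : Fin m, i < j → (p1 i j ↔ p2 i j) := by
      intro i j hij
      have hk := congrFun hGeq (e ⟨(i, j), hij⟩)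
      rw [hG] at hk
      simp only [Equiv.symm_apply_apply] at hk
      exact decide_eq_decide.mp hk
    have flipped : ∀ (p : Fin m → Fin m → Prop) (x : EuclideanSpace ℝ (Fin d)),
        (∀ i j : Fin m, i ≠ j → ‖x - c i‖ ≠ ‖x - c j‖) →
        (∀ i j : Fin m, p i j ↔ ‖x - c i‖ < ‖x - c j‖) →
        ∀ i j : Fin m, i ≠ j → (p i j ↔ ¬ p j i) := by
      intro p x hfree hp i j hij
      rw [hp i j, hp j i]
      constructor
      · exact fun h h' => lt_asymm h h'
      · intro h
        exact lt_of_le_of_ne (not_lt.mp h) (hfree i j hij)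
    funext i j
    rcases lt_trichotomy i j with hij | hij | hij
    · exact propext (key i j hij)
    · subst hij
      apply propext
      constructor
      · intro h; exact absurd ((hp1 i i).mp h) (lt_irrefl _)
      · intro h; exact absurd ((hp2 i i).mp h) (lt_irrefl _)
    · apply propext
      have h1 := flipped p1 x1 hfree1 hp1 i j (ne_of_gt hij)
      have h2 := flipped p2 x2 hfree2 hp2 i j (ne_of_gt hij)
      rw [h1, h2, key j i hij]
  calc PS.ncard ≤ (signSet (EuclideanSpace ℝ (Fin d)) a b).ncard :=
        Set.ncard_le_ncard_of_injOn G hmaps hinjG (Set.toFinite _)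
    _ ≤ ∑ i ∈ Finset.range (d + 1), Nat.choose N i :=
        signSet_ncard_le N (EuclideanSpace ℝ (Fin d)) d (le_of_eq finrank_euclideanSpace_fin) a b
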